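/- Let f(z) = ∑_{n≥0} fₙ zⁿ and g(z) = ∑_{n≥0} gₙ zⁿ be power series with radii of convergence R_f, R_g > 0, and let 0 < r < R_f, |z| < r·R_g. Then the Hadamard product (f ⊙ g)(z) := ∑_{n≥0} fₙ gₙ zⁿ converges and equals (1/(2πi)) ∮_{|w|=r} f(w) g(z/w) dw/w. -/

import Mathlib

open MeasureTheory Metric Set Complex Filter

private lemma abs_summable_of_lt {f : ℕ → ℂ} {R : ℝ}
    (hf : ∀ w : ℂ, ‖w‖ < R → Summable (fun n => f n * w ^ n))
    {s : ℝ} (hs : 0 ≤ s) (hsR : s < R) :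
    Summable (fun n => ‖f n‖ * s ^ n) := by
  set t : ℝ := (s + R) / 2 with ht
  have hst : s < t := by rw [ht]; linarith
  have htR : t < R := by rw [ht]; linarith
  have ht0 : 0 < t := lt_of_le_of_lt hs hst
  have hsum : Summable fun n => f n * (t : ℂ) ^ n := by
    apply hf
    rw [Complex.norm_real, Real.norm_of_nonneg ht0.le]
    exact htR
  have htend : Tendsto (fun n => ‖f n * (t:ℂ) ^ n‖) atTop (nhds 0) := by
    simpa using hsum.tendsto_atTop_zero.norm
  obtain ⟨C, hC⟩ := htend.bddAbove_range
  have hC' : ∀ n, ‖f n‖ * t ^ n ≤ C := by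
    intro n
    have h1 := hC (Set.mem_range_self n)
    calc ‖f n‖ * t ^ n = ‖f n * (t:ℂ)^n‖ := by
          rw [norm_mul, norm_pow, Complex.norm_real, Real.norm_of_nonneg ht0.le]
      _ ≤ C := h1
  have hgeo : Summable fun n : ℕ => C * (s / t) ^ n :=
    (summable_geometric_of_lt_one (div_nonneg hs ht0.le) ((div_lt_one ht0).mpr hst)).mul_left C
  apply hgeo.of_nonneg_of_le (fun n => mul_nonneg (norm_nonneg _) (pow_nonneg hs n))
  intro n
  have h2 : ‖f n‖ * s ^ n = (‖f n‖ * t ^ n) * (s / t) ^ n := by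
    have : t ≠ 0 := ht0.ne'
    rw [mul_assoc, ← mul_pow, mul_div_assoc', mul_div_cancel_left₀ s this]
  rw [h2]
  exact mul_le_mul_of_nonneg_right (hC' n) (pow_nonneg (div_nonneg hs ht0.le) n)

theorem hadamard_product_contour (f g : ℕ → ℂ) (Rf Rg r : ℝ) (hRf : 0 < Rf) (hRg : 0 < Rg)
    (hf : ∀ w : ℂ, ‖w‖ < Rf → Summable (fun n => f n * w ^ n))
    (hg : ∀ w : ℂ, ‖w‖ < Rg → Summable (fun n => g n * w ^ n))
    (hr : 0 < r) (hrRf : r < Rf) (z : ℂ) (hz : ‖z‖ < r * Rg) :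
    Summable (fun n => f n * g n * z ^ n) ∧
    ∑' n, f n * g n * z ^ n =
      (2 * Real.pi * Complex.I)⁻¹ *
        ∮ w in C(0, r), (∑' n, f n * w ^ n) * (∑' n, g n * (z / w) ^ n) / w := by
  have hz0 : 0 ≤ ‖z‖ := norm_nonneg z
  have hzr : ‖z‖ / r < Rg := by rw [div_lt_iff₀ hr]; linarith [hz, mul_comm r Rg]
  have hFs : Summable fun m => ‖f m‖ * r ^ m := abs_summable_of_lt hf hr.le hrRf
  have hGs : Summable fun n => ‖g n‖ * (‖z‖ / r) ^ n :=
    abs_summable_of_lt hg (div_nonneg hz0 hr.le) hzr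
  obtain ⟨C, hC⟩ := hFs.tendsto_atTop_zero.bddAbove_range
  have hC' : ∀ m, ‖f m‖ * r ^ m ≤ C := fun m => hC (Set.mem_range_self m)
  -- Part 1
  have hsum1 : Summable fun n => f n * g n * z ^ n := by
    apply Summable.of_norm_bounded (hGs.mul_left C)
    intro n
    have h1 : ‖f n * g n * z ^ n‖ = (‖f n‖ * r ^ n) * (‖g n‖ * (‖z‖ / r) ^ n) := by
      rw [norm_mul, norm_mul, norm_pow, div_pow]
      field_simp
    rw [h1]
    exact mul_le_mul_of_nonneg_right (hC' n)
      (mul_nonneg (norm_nonneg _) (pow_nonneg (div_nonneg hz0 hr.le) n))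
  refine ⟨hsum1, ?_⟩
  -- Notation and basic facts about the circle map
  have hu : ∀ θ : ℝ, ‖circleMap 0 r θ‖ = r := fun θ => by
    simp [norm_circleMap_zero, abs_of_pos hr]
  have hu0 : ∀ θ : ℝ, circleMap 0 r θ ≠ 0 := fun θ => circleMap_ne_center hr.ne'
  set F : ℕ × ℕ → ℝ → ℂ := fun p θ =>
    (circleMap 0 r θ * Complex.I) *
      (f p.1 * g p.2 * z ^ p.2 * circleMap 0 r θ ^ ((p.1 : ℤ) - p.2 - 1)) with hF
  -- Step A : pointwise expansion of the integrand into a double series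
  have stepA : ∀ θ : ℝ,
      deriv (circleMap 0 r) θ •
        ((∑' n, f n * circleMap 0 r θ ^ n) * (∑' n, g n * (z / circleMap 0 r θ) ^ n) /
          circleMap 0 r θ) = ∑' p : ℕ × ℕ, F p θ := by
    intro θ
    have h1 : Summable fun m => f m * circleMap 0 r θ ^ m := hf _ (by rw [hu]; exact hrRf)
    have h2 : Summable fun n => g n * (z / circleMap 0 r θ) ^ n :=
      hg _ (by rw [norm_div, hu]; exact hzr)
    have h3 : Summable fun p : ℕ × ℕ =>
        (f p.1 * circleMap 0 r θ ^ p.1) * (g p.2 * (z / circleMap 0 r θ) ^ p.2) := by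
      apply Summable.of_norm
      refine (hFs.mul_of_nonneg hGs (fun m => by positivity) (fun n => by positivity)).congr ?_
      intro p
      rw [norm_mul, norm_mul, norm_mul, norm_pow, norm_pow, norm_div, hu θ, div_pow]
    rw [deriv_circleMap, smul_eq_mul, Summable.tsum_mul_tsum h1 h2 h3, div_eq_mul_inv,
      ← tsum_mul_right, ← tsum_mul_left]
    apply tsum_congr
    intro p
    simp only [hF]
    have hzp : circleMap 0 r θ ^ ((p.1 : ℤ) - p.2 - 1) =
        circleMap 0 r θ ^ p.1 / circleMap 0 r θ ^ p.2 / circleMap 0 r θ := by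
      rw [zpow_sub₀ (hu0 θ), zpow_sub₀ (hu0 θ), zpow_natCast, zpow_natCast, zpow_one]
    rw [hzp, div_pow]
    have := hu0 θ
    field_simp
  -- norm of each term is constant in θ
  have hb : ∀ (p : ℕ × ℕ) (θ : ℝ),
      ‖F p θ‖ = ‖f p.1‖ * r ^ p.1 * (‖g p.2‖ * (‖z‖ / r) ^ p.2) := by
    intro p θ
    simp only [hF]
    rw [norm_mul, norm_mul, norm_I, mul_one, norm_mul, norm_mul, norm_pow, norm_zpow, hu θ,
      zpow_sub₀ hr.ne', zpow_sub₀ hr.ne', zpow_natCast, zpow_natCast, zpow_one, div_pow]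
    field_simp
    rw [norm_mul]
    ring
  -- integrability of each term
  have hInt : ∀ p : ℕ × ℕ, Integrable (F p) (volume.restrict (Ioc 0 (2 * Real.pi))) := by
    intro p
    apply Continuous.integrableOn_Ioc
    exact ((continuous_circleMap 0 r).mul continuous_const).mul
      (continuous_const.mul ((continuous_circleMap 0 r).zpow₀ _ (fun θ => Or.inl (hu0 θ))))
  -- summability of the integrals of norms
  have hIntNorm : ∀ p : ℕ × ℕ, ∫ θ in Ioc 0 (2 * Real.pi), ‖F p θ‖ =
      (2 * Real.pi) * (‖f p.1‖ * r ^ p.1 * (‖g p.2‖ * (‖z‖ / r) ^ p.2)) := by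
    intro p
    simp_rw [hb p]
    rw [setIntegral_const, measureReal_def, Real.volume_Ioc, sub_zero, ENNReal.toReal_ofReal Real.two_pi_pos.le,
      smul_eq_mul]
  have hSum : Summable fun p : ℕ × ℕ => ∫ θ in Ioc 0 (2 * Real.pi), ‖F p θ‖ := by
    refine (((hFs.mul_of_nonneg hGs (fun m => by positivity) (fun n => by positivity)).mul_left
      (2 * Real.pi)).congr ?_)
    intro p
    exact (hIntNorm p).symm
  -- the contour integral as a sum of elementary integrals
  have hcore : (∮ w in C(0, r), (∑' n, f n * w ^ n) * (∑' n, g n * (z / w) ^ n) / w) =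
      ∑' p : ℕ × ℕ, ∫ θ in Ioc 0 (2 * Real.pi), F p θ := by
    simp only [circleIntegral]
    rw [intervalIntegral.integral_of_le Real.two_pi_pos.le,
      integral_congr_ae (Filter.Eventually.of_forall stepA),
      ← integral_tsum_of_summable_integral_norm hInt hSum]
  -- evaluation of each elementary integral
  have hterm : ∀ p : ℕ × ℕ, ∫ θ in Ioc 0 (2 * Real.pi), F p θ =
      (f p.1 * g p.2 * z ^ p.2) * (if p.1 = p.2 then (2 * Real.pi * Complex.I) else 0) := by
    intro p
    have h1 : ∫ θ in Ioc 0 (2 * Real.pi), F p θ =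
        (f p.1 * g p.2 * z ^ p.2) *
          ∮ w in C(0, r), (w - 0) ^ ((p.1 : ℤ) - p.2 - 1) := by
      simp only [circleIntegral]
      rw [intervalIntegral.integral_of_le Real.two_pi_pos.le, ← MeasureTheory.integral_const_mul]
      apply integral_congr_ae
      apply Filter.Eventually.of_forall
      intro θ
      simp only [hF, deriv_circleMap, smul_eq_mul, sub_zero]
      ring
    rw [h1]
    congr 1
    by_cases hmn : p.1 = p.2
    · rw [if_pos hmn]
      have hk : ((p.1 : ℤ) - p.2 - 1) = -1 := by omega
      rw [hk]
      have h2 := circleIntegral.integral_sub_inv_of_mem_ball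
        (w := (0 : ℂ)) (c := (0 : ℂ)) (R := r) (Metric.mem_ball_self hr)
      simpa [zpow_neg_one] using h2
    · rw [if_neg hmn]
      apply circleIntegral.integral_sub_zpow_of_ne
      intro h
      exact hmn (by omega)
  -- summing the diagonal
  have hinj : Function.Injective (fun n : ℕ => ((n, n) : ℕ × ℕ)) := fun a b h =>
    congrArg Prod.fst h
  have hdiag : ∑' p : ℕ × ℕ,
      (f p.1 * g p.2 * z ^ p.2) * (if p.1 = p.2 then (2 * Real.pi * Complex.I) else 0) =
      (2 * Real.pi * Complex.I) * ∑' n, f n * g n * z ^ n := by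
    rw [← Function.Injective.tsum_eq hinj]
    · have heq : ∀ n : ℕ, f n * g n * z ^ n * (if n = n then (2 * Real.pi * Complex.I) else 0)
          = f n * g n * z ^ n * (2 * Real.pi * Complex.I) := fun n => by rw [if_pos rfl]
      rw [tsum_congr heq, tsum_mul_right, mul_comm]
    · intro p hp
      rcases p with ⟨m, n⟩
      by_contra hpr
      apply hp
      have hmn : m ≠ n := by
        intro h
        exact hpr ⟨m, by simp [h]⟩
      simp [if_neg hmn]
  have hfinal : (∮ w in C(0, r), (∑' n, f n * w ^ n) * (∑' n, g n * (z / w) ^ n) / w) =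
      (2 * Real.pi * Complex.I) * ∑' n, f n * g n * z ^ n :=
    hcore.trans ((tsum_congr hterm).trans hdiag)
  rw [hfinal, inv_mul_cancel_left₀]
  exact mul_ne_zero (mul_ne_zero two_ne_zero
    (Complex.ofReal_ne_zero.mpr Real.pi_ne_zero)) Complex.I_ne_zero
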